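/- Let G be a finite simple graph containing an edge {v1, v2}, and let G' be the graph obtained from G by deleting the edge {v1, v2} (on the same vertex set). If s ≤ 0 or s ≥ 1, then the largest eigenvalue of M_{G'}(s) is at most the largest eigenvalue of M_G(s), i.e. λ_max(M_{G'}(s)) ≤ λ_max(M_G(s)). -/

import Mathlib

open scoped Classical
open Matrix Polynomial

/-- The deformed Laplacian matrix `M_G(s) = I - s·A(G) + s²·(D(G) - I)` of a finite
simple graph `G`. -/
noncomputable def deformedLap {V : Type*} [Fintype V] (G : SimpleGraph V) (s : ℝ) :
    Matrix V V ℝ :=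
  1 - s • G.adjMatrix ℝ + s ^ 2 • (Matrix.diagonal (fun v => (G.degree v : ℝ)) - 1)

/-- The largest (real) eigenvalue of a matrix: the supremum of its real spectrum.
For a real symmetric matrix this is the maximal eigenvalue (the paper's `ρ`). -/
noncomputable def lamMax {n : Type*} [Fintype n] (M : Matrix n n ℝ) : ℝ :=
  sSup (spectrum ℝ M)

section spectral
variable {n : Type*} [Fintype n] [Nonempty n]

lemma eig_le_lamMax {A : Matrix n n ℝ} (hA : A.IsHermitian) (i : n) :
    hA.eigenvalues i ≤ lamMax A := by
  refine le_csSup ?_ (hA.eigenvalues_mem_spectrum_real i)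
  rw [hA.spectrum_real_eq_range_eigenvalues]
  exact (Set.finite_range _).bddAbove

lemma star_U_eq {A : Matrix n n ℝ} (hA : A.IsHermitian) :
    star (hA.eigenvectorUnitary : Matrix n n ℝ) = (hA.eigenvectorUnitary : Matrix n n ℝ)ᵀ := by
  ext i j; simp [Matrix.star_apply]

lemma rayleigh_le {A : Matrix n n ℝ} (hA : A.IsHermitian) (x : n → ℝ) :
    x ⬝ᵥ (A *ᵥ x) ≤ lamMax A * (x ⬝ᵥ x) := by
  set U : Matrix n n ℝ := (hA.eigenvectorUnitary : Matrix n n ℝ) with hU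
  set y : n → ℝ := star U *ᵥ x with hy
  have hdiag : (RCLike.ofReal ∘ hA.eigenvalues : n → ℝ) = hA.eigenvalues := by
    ext i; simp
  have hxAx : x ⬝ᵥ (A *ᵥ x) = y ⬝ᵥ (Matrix.diagonal hA.eigenvalues *ᵥ y) := by
    conv_lhs => rw [hA.spectral_theorem, Unitary.conjStarAlgAut_apply]
    rw [hdiag, ← Matrix.mulVec_mulVec, ← Matrix.mulVec_mulVec, Matrix.dotProduct_mulVec]
    congr 1
    rw [← Matrix.mulVec_transpose, ← star_U_eq hA]
  have hxx : x ⬝ᵥ x = y ⬝ᵥ y := by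
    have h1 : (U * star U) = 1 := (Matrix.mem_unitaryGroup_iff).mp hA.eigenvectorUnitary.2
    conv_lhs => rw [show x ⬝ᵥ x = x ⬝ᵥ ((U * star U) *ᵥ x) by rw [h1, Matrix.one_mulVec]]
    rw [← Matrix.mulVec_mulVec, Matrix.dotProduct_mulVec]
    congr 1
    rw [← Matrix.mulVec_transpose, ← star_U_eq hA]
  rw [hxAx, hxx]
  have : y ⬝ᵥ (Matrix.diagonal hA.eigenvalues *ᵥ y) = ∑ i, hA.eigenvalues i * (y i * y i) := by
    simp only [dotProduct, Matrix.mulVec_diagonal]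
    exact Finset.sum_congr rfl fun i _ => by ring
  rw [this, dotProduct, Finset.mul_sum]
  refine Finset.sum_le_sum fun i _ => ?_
  exact mul_le_mul_of_nonneg_right (eig_le_lamMax hA i) (mul_self_nonneg _)

lemma exists_max_eigvec {B : Matrix n n ℝ} (hB : B.IsHermitian) :
    ∃ v : n → ℝ, v ⬝ᵥ v = 1 ∧ B *ᵥ v = lamMax B • v := by
  have hmem : lamMax B ∈ Set.range hB.eigenvalues := by
    rw [← hB.spectrum_real_eq_range_eigenvalues]
    exact Set.Nonempty.csSup_mem
      (by rw [hB.spectrum_real_eq_range_eigenvalues]; exact Set.range_nonempty _)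
      (by rw [hB.spectrum_real_eq_range_eigenvalues]; exact Set.finite_range _)
  obtain ⟨i, hi⟩ := hmem
  refine ⟨⇑(hB.eigenvectorBasis i), ?_, by rw [hB.mulVec_eigenvectorBasis, hi]⟩
  have h1 := (orthonormal_iff_ite.mp hB.eigenvectorBasis.orthonormal) i i
  simp only [if_pos rfl, PiLp.inner_apply, RCLike.inner_apply, starRingEnd_apply] at h1
  simpa [dotProduct] using h1

lemma lamMax_le_lamMax {A B : Matrix n n ℝ} (hA : A.IsHermitian) (hB : B.IsHermitian)
    (h : ∀ x : n → ℝ, ∃ y : n → ℝ, y ⬝ᵥ y = x ⬝ᵥ x ∧ x ⬝ᵥ (B *ᵥ x) ≤ y ⬝ᵥ (A *ᵥ y)) :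
    lamMax B ≤ lamMax A := by
  obtain ⟨v, hv1, hv2⟩ := exists_max_eigvec hB
  obtain ⟨y, hy1, hy2⟩ := h v
  have h1 : v ⬝ᵥ (B *ᵥ v) = lamMax B := by
    rw [hv2, dotProduct_smul, hv1]; simp
  have h2 := rayleigh_le hA y
  rw [hy1, hv1, mul_one] at h2
  linarith [h1 ▸ hy2]

end spectral

section graph
variable {V : Type*} [Fintype V]

lemma deformedLap_isHermitian (G : SimpleGraph V) (s : ℝ) : (deformedLap G s).IsHermitian := by
  unfold Matrix.IsHermitian deformedLap
  ext i j
  simp only [Matrix.conjTranspose_apply, Matrix.add_apply, Matrix.sub_apply, Matrix.smul_apply,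
    Matrix.one_apply, Matrix.diagonal_apply, SimpleGraph.adjMatrix_apply, star_trivial,
    smul_eq_mul]
  by_cases hij : i = j
  · subst hij; simp
  · rw [if_neg (Ne.symm hij), if_neg hij, if_neg (Ne.symm hij), if_neg hij,
      SimpleGraph.adj_comm]

lemma quad_deformedLap (G : SimpleGraph V) (s : ℝ) (x : V → ℝ) :
    x ⬝ᵥ (deformedLap G s *ᵥ x) =
      (1 - s ^ 2) * (x ⬝ᵥ x) + s ^ 2 * ∑ v, (G.degree v : ℝ) * x v ^ 2
        - s * ∑ i, ∑ j, (if G.Adj i j then x i * x j else 0) := by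
  have hd : x ⬝ᵥ (Matrix.diagonal (fun v => (G.degree v : ℝ)) *ᵥ x)
      = ∑ v, (G.degree v : ℝ) * x v ^ 2 := by
    simp only [dotProduct, Matrix.mulVec_diagonal]
    exact Finset.sum_congr rfl fun i _ => by ring
  simp only [deformedLap, Matrix.add_mulVec, Matrix.sub_mulVec, Matrix.smul_mulVec,
    Matrix.one_mulVec, dotProduct_add, dotProduct_sub, dotProduct_smul,
    smul_eq_mul, hd, SimpleGraph.dotProduct_mulVec_adjMatrix]
  ring

end graph

section diff
variable {V : Type*} [Fintype V] {G : SimpleGraph V} {v1 v2 : V}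

lemma nbr1 (h : G.Adj v1 v2) :
    (G.deleteEdges ({s(v1, v2)} : Set (Sym2 V))).neighborFinset v1
      = (G.neighborFinset v1).erase v2 := by
  have hne := h.ne
  ext u
  simp only [SimpleGraph.mem_neighborFinset, SimpleGraph.deleteEdges_adj,
    Set.mem_singleton_iff, Sym2.eq_iff, Finset.mem_erase]
  tauto

lemma nbr_other (h : G.Adj v1 v2) {v : V} (h1 : v ≠ v1) (h2 : v ≠ v2) :
    (G.deleteEdges ({s(v1, v2)} : Set (Sym2 V))).neighborFinset v
      = G.neighborFinset v := by
  ext u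
  simp only [SimpleGraph.mem_neighborFinset, SimpleGraph.deleteEdges_adj,
    Set.mem_singleton_iff, Sym2.eq_iff]
  tauto

lemma deleteEdges_comm' : G.deleteEdges ({s(v1, v2)} : Set (Sym2 V))
    = G.deleteEdges ({s(v2, v1)} : Set (Sym2 V)) := by
  have : s(v1, v2) = s(v2, v1) := Sym2.eq_swap
  rw [this]

lemma deg_delete (h : G.Adj v1 v2) (v : V) :
    ((G.deleteEdges ({s(v1, v2)} : Set (Sym2 V))).degree v : ℝ)
      = (G.degree v : ℝ) - (if v = v1 then 1 else 0) - (if v = v2 then 1 else 0) := by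
  have hne := h.ne
  by_cases hv1 : v = v1
  · subst hv1
    rw [if_pos rfl, if_neg hne]
    have hmem : v2 ∈ G.neighborFinset v := by simpa [SimpleGraph.mem_neighborFinset] using h
    have hcard : ((G.deleteEdges ({s(v, v2)} : Set (Sym2 V))).degree v) + 1
        = G.degree v := by
      show ((G.deleteEdges _).neighborFinset v).card + 1 = (G.neighborFinset v).card
      rw [nbr1 h, Finset.card_erase_add_one hmem]
    push_cast [← hcard]; ring
  · by_cases hv2 : v = v2
    · subst hv2
      rw [if_neg hv1, if_pos rfl]
      have h' : G.Adj v v1 := h.symm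
      have hmem : v1 ∈ G.neighborFinset v := by simpa [SimpleGraph.mem_neighborFinset] using h'
      have hcard : ((G.deleteEdges ({s(v1, v)} : Set (Sym2 V))).degree v) + 1
          = G.degree v := by
        rw [Sym2.eq_swap]
        show ((G.deleteEdges _).neighborFinset v).card + 1 = (G.neighborFinset v).card
        rw [nbr1 h', Finset.card_erase_add_one hmem]
      push_cast [← hcard]; ring
    · rw [if_neg hv1, if_neg hv2]
      have : ((G.deleteEdges ({s(v1, v2)} : Set (Sym2 V))).degree v)
          = G.degree v := by
        show ((G.deleteEdges _).neighborFinset v).card = (G.neighborFinset v).card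
        rw [nbr_other h hv1 hv2]
      rw [this]; ring

lemma deg_sum_diff (h : G.Adj v1 v2) (x : V → ℝ) :
    ∑ v, (G.degree v : ℝ) * x v ^ 2
      = (∑ v, ((G.deleteEdges ({s(v1, v2)} : Set (Sym2 V))).degree v : ℝ) * x v ^ 2)
        + x v1 ^ 2 + x v2 ^ 2 := by
  have : ∀ v, (G.degree v : ℝ) * x v ^ 2
      = ((G.deleteEdges ({s(v1, v2)} : Set (Sym2 V))).degree v : ℝ) * x v ^ 2
        + (if v = v1 then x v ^ 2 else 0) + (if v = v2 then x v ^ 2 else 0) := by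
    intro v
    rw [deg_delete h v]
    split_ifs <;> ring
  rw [Finset.sum_congr rfl fun v _ => this v]
  rw [Finset.sum_add_distrib, Finset.sum_add_distrib]
  simp [Finset.sum_ite_eq']

lemma adj_sum_diff (h : G.Adj v1 v2) (x : V → ℝ) :
    ∑ i, ∑ j, (if G.Adj i j then x i * x j else 0)
      = (∑ i, ∑ j,
          (if (G.deleteEdges ({s(v1, v2)} : Set (Sym2 V))).Adj i j
            then x i * x j else 0))
        + x v1 * x v2 + x v2 * x v1 := by
  have hne := h.ne
  have key : ∀ i j, (if G.Adj i j then x i * x j else 0)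
      = (if (G.deleteEdges ({s(v1, v2)} : Set (Sym2 V))).Adj i j then x i * x j else 0)
        + (if i = v1 ∧ j = v2 then x i * x j else 0)
        + (if i = v2 ∧ j = v1 then x i * x j else 0) := by
    intro i j
    by_cases hA : G.Adj i j
    · by_cases h1 : i = v1 ∧ j = v2
      · obtain ⟨rfl, rfl⟩ := h1
        have hnd : ¬ (G.deleteEdges ({s(i, j)} : Set (Sym2 V))).Adj i j := by
          simp [SimpleGraph.deleteEdges_adj]
        simp [hA, hnd, hne]
      · by_cases h2 : i = v2 ∧ j = v1
        · obtain ⟨rfl, rfl⟩ := h2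
          have hnd : ¬ (G.deleteEdges ({s(j, i)} : Set (Sym2 V))).Adj i j := by
            rw [SimpleGraph.deleteEdges_adj]
            rintro ⟨-, hn⟩
            exact hn (by rw [Set.mem_singleton_iff]; exact Sym2.eq_swap)
          simp [hA, hnd, hne, Ne.symm hne]
        · have hd : (G.deleteEdges ({s(v1, v2)} : Set (Sym2 V))).Adj i j := by
            simp only [SimpleGraph.deleteEdges_adj, Set.mem_singleton_iff, Sym2.eq_iff]
            exact ⟨hA, by tauto⟩
          simp [hd, h1, h2]
    · have hnd : ¬ (G.deleteEdges ({s(v1, v2)} : Set (Sym2 V))).Adj i j :=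
        fun hc => hA hc.1
      have h1 : ¬ (i = v1 ∧ j = v2) := by rintro ⟨rfl, rfl⟩; exact hA h
      have h2 : ¬ (i = v2 ∧ j = v1) := by rintro ⟨rfl, rfl⟩; exact hA h.symm
      simp [hA, hnd, h1, h2]
  rw [Finset.sum_congr rfl fun i _ => Finset.sum_congr rfl fun j _ => key i j]
  simp only [Finset.sum_add_distrib]
  congr 1
  · congr 1
    · simp [ite_and, Finset.sum_ite_eq']
  · simp [ite_and, Finset.sum_ite_eq']

end diff

/-- Deleting an edge does not increase the largest eigenvalue of the deformed
Laplacian when `s ≤ 0` or `s ≥ 1`. -/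
theorem stmt_1 {V : Type*} [Fintype V] (G : SimpleGraph V) (v1 v2 : V)
    (h : G.Adj v1 v2) (s : ℝ) (hs : s ≤ 0 ∨ 1 ≤ s) :
    lamMax (deformedLap (G.deleteEdges ({s(v1, v2)} : Set (Sym2 V))) s)
      ≤ lamMax (deformedLap G s) := by
  set G' := G.deleteEdges ({s(v1, v2)} : Set (Sym2 V)) with hG'
  clear_value G'
  cases isEmpty_or_nonempty V with
  | inl hV =>
    have hz : ∀ H : SimpleGraph V, lamMax (deformedLap H s) = 0 := by
      intro H
      unfold lamMax
      rw [(deformedLap_isHermitian H s).spectrum_real_eq_range_eigenvalues, Set.range_eq_empty]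
      exact Real.sSup_empty
    rw [hz, hz]
  | inr hV =>
    refine lamMax_le_lamMax (deformedLap_isHermitian G s) (deformedLap_isHermitian G' s) ?_
    intro x
    set y : V → ℝ := if s ≤ 0 then (fun v => |x v|) else x with hy
    have hyv : ∀ v, s ≤ 0 → y v = |x v| := by
      intro v hss; rw [hy, if_pos hss]
    have hyx : ¬ s ≤ 0 → y = x := by
      intro hss; rw [hy, if_neg hss]
    have hysq : ∀ v, y v ^ 2 = x v ^ 2 := by
      intro v
      by_cases hss : s ≤ 0
      · rw [hyv v hss, sq_abs]
      · rw [hyx hss]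
    have hyy : y ⬝ᵥ y = x ⬝ᵥ x := by
      simp only [dotProduct]
      refine Finset.sum_congr rfl fun v _ => ?_
      have := hysq v
      nlinarith [hysq v]
    refine ⟨y, hyy, ?_⟩
    have step1 : x ⬝ᵥ (deformedLap G' s *ᵥ x) ≤ y ⬝ᵥ (deformedLap G' s *ᵥ y) := by
      by_cases hss : s ≤ 0
      · rw [quad_deformedLap, quad_deformedLap, hyy]
        have hdeg : ∑ v, (G'.degree v : ℝ) * y v ^ 2 = ∑ v, (G'.degree v : ℝ) * x v ^ 2 :=
          Finset.sum_congr rfl fun v _ => by rw [hysq]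
        simp only [hysq]
        have hS : ∑ i, ∑ j, (if G'.Adj i j then x i * x j else 0)
            ≤ ∑ i, ∑ j, (if G'.Adj i j then y i * y j else 0) := by
          refine Finset.sum_le_sum fun i _ => Finset.sum_le_sum fun j _ => ?_
          split_ifs
          · rw [hyv i hss, hyv j hss, ← abs_mul]
            exact le_abs_self _
          · exact le_rfl
        have := mul_le_mul_of_nonneg_left hS (neg_nonneg.mpr hss)
        nlinarith [this]
      · rw [hyx hss]
    have step2 : y ⬝ᵥ (deformedLap G' s *ᵥ y) ≤ y ⬝ᵥ (deformedLap G s *ᵥ y) := by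
      rw [quad_deformedLap, quad_deformedLap, deg_sum_diff h y, adj_sum_diff h y]
      simp only [← hG']
      have e : ∑ v, ((G.deleteEdges ({s(v1, v2)} : Set (Sym2 V))).degree v : ℝ) * y v ^ 2
          = ∑ v, (G'.degree v : ℝ) * y v ^ 2 := by
        subst hG'; congr!
      rw [e]
      rcases hs with hs0 | hs1
      · have h1 : 0 ≤ y v1 := by rw [hyv v1 hs0]; exact abs_nonneg _
        have h2 : 0 ≤ y v2 := by rw [hyv v2 hs0]; exact abs_nonneg _
        nlinarith [mul_nonneg (mul_nonneg (neg_nonneg.mpr hs0) h1) h2,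
          sq_nonneg (s * y v1), sq_nonneg (s * y v2)]
      · have ha : 0 ≤ s - 1 := by linarith
        have hb : (0:ℝ) ≤ s := by linarith
        nlinarith [mul_nonneg (mul_nonneg hb ha) (add_nonneg (sq_nonneg (y v1)) (sq_nonneg (y v2))),
          mul_nonneg hb (sq_nonneg (y v1 - y v2))]
    exact step1.trans step2
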